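/- arXiv:1110.6770 — 3 statements merged into one kernel-verified Lean document; each statement's English description precedes it below -/
import Mathlib

section
/- Let R be a Dedekind complete Riesz space and let ((a_{i,j}^{(k)})_{i,j})_{k∈ℕ} be a countable family of (D)-sequences in R. Then for each fixed element u ∈ R with u ≥ 0 there exists a (D)-sequence (a_{i,j})_{i,j} in R such that, for every map φ : ℕ → ℕ and every s ∈ ℕ, one has u ∧ Σ_{k=1}^{s} ( ⋁_{i=1}^{∞} a_{i,φ(i+k)}^{(k)} ) ≤ ⋁_{i=1}^{∞} a_{i,φ(i)} (Fremlin's Lemma). -/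
open scoped BigOperators

/-- A `(D)`-sequence (regulator) in a Riesz space `R`: a bounded double sequence
which is nonnegative, decreasing in `j`, and with `⨅ j, a i j = 0` for each `i`. -/
def IsDSeq {R : Type*} [ConditionallyCompleteLattice R] [AddCommGroup R]
    (a : ℕ → ℕ → R) : Prop :=
  (∃ u : R, ∀ i j, a i j ≤ u) ∧ (∀ i j, 0 ≤ a i j) ∧
    (∀ i j, a i (j + 1) ≤ a i j) ∧ (∀ i, (⨅ j, a i j) = 0)

/-- `R` is weakly σ-distributive. -/
def WeaklySigmaDistrib (R : Type*) [ConditionallyCompleteLattice R] [AddCommGroup R] : Prop :=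
  ∀ a : ℕ → ℕ → R, IsDSeq a → (⨅ φ : ℕ → ℕ, ⨆ i, a i (φ i)) = 0

/-- `R` is super Dedekind complete: every nonempty subset bounded from above contains a
countable subset with the same supremum. -/
def SuperDedekindComplete (R : Type*) [ConditionallyCompleteLattice R] : Prop :=
  ∀ S : Set R, S.Nonempty → BddAbove S →
    ∃ C : Set R, C ⊆ S ∧ C.Nonempty ∧ C.Countable ∧ sSup C = sSup S

/-- `(D)`-convergence of a sequence in `R`. -/
def DConv {R : Type*} [ConditionallyCompleteLattice R] [AddCommGroup R]
    (r : ℕ → R) (l : R) : Prop :=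
  ∃ a : ℕ → ℕ → R, IsDSeq a ∧
    ∀ φ : ℕ → ℕ, ∃ n₀ : ℕ, ∀ n ≥ n₀, |r n - l| ≤ ⨆ i, a i (φ i)

/-- The closure of a subset `C` of `R`:
`cl(C) = ⋃_{(a_{i,j})} ⋂_{φ} U(C, ⨆ i, a i (φ i))`. -/
def clSet {R : Type*} [ConditionallyCompleteLattice R] [AddCommGroup R]
    (C : Set R) : Set R :=
  {z | ∃ a : ℕ → ℕ → R, IsDSeq a ∧
    ∀ φ : ℕ → ℕ, ∃ x ∈ C, |x - z| ≤ ⨆ i, a i (φ i)}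

/-- A tagged partition `{(Es i, ts i) : i < k}` of the set `E`:
measurable pieces, tags belonging to the pieces, overlaps of `μ`-measure zero,
whose union is `E`. -/
def IsPartition {R : Type*} [ConditionallyCompleteLattice R] [AddCommGroup R]
    {T : Type*} [MeasurableSpace T]
    (μ : Set T → R) (E : Set T) (k : ℕ) (Es : ℕ → Set T) (ts : ℕ → T) : Prop :=
  (∀ i < k, MeasurableSet (Es i)) ∧ (∀ i < k, ts i ∈ Es i) ∧
    (∀ i < k, ∀ j < k, i ≠ j → μ (Es i ∩ Es j) = 0) ∧ (⋃ i < k, Es i) = E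

/-- `γ`-fineness of a tagged partition. -/
def IsFine {T : Type*} [PseudoMetricSpace T]
    (γ : T → ℝ) (k : ℕ) (Es : ℕ → Set T) (ts : ℕ → T) : Prop :=
  ∀ i < k, ∀ w ∈ Es i, dist w (ts i) < γ (ts i)

/-- Regularity of a positive finitely additive set function `μ` on the Borel sets of `T`. -/
def IsRegularSetFn {R : Type*} [ConditionallyCompleteLattice R] [AddCommGroup R]
    {T : Type*} [MeasurableSpace T] [TopologicalSpace T]
    (μ : Set T → R) : Prop :=
  ∀ E : Set T, MeasurableSet E → ∃ a : ℕ → ℕ → R, IsDSeq a ∧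
    ∀ φ : ℕ → ℕ, ∃ K U : Set T, IsCompact K ∧ IsOpen U ∧ K ⊆ E ∧ E ⊆ U ∧
      μ (U \ K) ≤ ⨆ i, a i (φ i)

/-- `f` is Kurzweil–Henstock integrable on `E` with integral `I`. -/
def HasKHIntegral {R : Type*} [ConditionallyCompleteLattice R] [CommRing R]
    {T : Type*} [MeasurableSpace T] [PseudoMetricSpace T]
    (μ : Set T → R) (f : T → R) (E : Set T) (I : R) : Prop :=
  ∃ a : ℕ → ℕ → R, IsDSeq a ∧ ∀ φ : ℕ → ℕ, ∃ γ : T → ℝ, (∀ t, 0 < γ t) ∧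
    ∀ (k : ℕ) (Es : ℕ → Set T) (ts : ℕ → T),
      IsPartition μ E k Es ts → IsFine γ k Es ts →
        |(∑ i ∈ Finset.range k, f (ts i) * μ (Es i)) - I| ≤ ⨆ i, a i (φ i)

/-- The closed Minkowski sum `Σ_{i<k} F(ts i) · μ(Es i)` of the sets `F(ts i) μ(Es i)`. -/
def setRiemannSum {R : Type*} [ConditionallyCompleteLattice R] [CommRing R]
    {T : Type*} [MeasurableSpace T]
    (μ : Set T → R) (F : T → Set R) (k : ℕ) (Es : ℕ → Set T) (ts : ℕ → T) : Set R :=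
  clSet {c | ∃ g : ℕ → R, (∀ i < k, g i ∈ F (ts i)) ∧
    c = ∑ i ∈ Finset.range k, g i * μ (Es i)}

/-- The `(*)`-integral `Φ(F,E)` of a multifunction `F` on `E`. -/
def starIntegral {R : Type*} [ConditionallyCompleteLattice R] [CommRing R]
    {T : Type*} [MeasurableSpace T] [PseudoMetricSpace T]
    (μ : Set T → R) (F : T → Set R) (E : Set T) : Set R :=
  {z | ∃ a : ℕ → ℕ → R, IsDSeq a ∧ ∀ φ : ℕ → ℕ, ∃ γ : T → ℝ, (∀ t, 0 < γ t) ∧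
    ∀ (k : ℕ) (Es : ℕ → Set T) (ts : ℕ → T),
      IsPartition μ E k Es ts → IsFine γ k Es ts →
        ∃ c ∈ setRiemannSum μ F k Es ts, |z - c| ≤ ⨆ i, a i (φ i)}

/-- The closed Minkowski sum of the finite family `S 0, …, S (n-1)` of subsets of `R`. -/
def finMinkSum {R : Type*} [ConditionallyCompleteLattice R] [AddCommGroup R]
    (n : ℕ) (S : ℕ → Set R) : Set R :=
  clSet {x | ∃ g : ℕ → R, (∀ k < n, g k ∈ S k) ∧ x = ∑ k ∈ Finset.range n, g k}

/-- The Aumann integral of `F` on `A`, via Kurzweil–Henstock integrable a.e. selections. -/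
def AumannIntegral {R : Type*} [ConditionallyCompleteLattice R] [CommRing R]
    {T : Type*} [MeasurableSpace T] [PseudoMetricSpace T]
    (μ : Set T → R) (F : T → Set R) (A : Set T) : Set R :=
  {I | ∃ f : T → R,
    (∃ N : Set T, MeasurableSet N ∧ μ N = 0 ∧ ∀ t ∉ N, f t ∈ F t) ∧
    (∃ J : R, HasKHIntegral μ f Set.univ J) ∧ HasKHIntegral μ f A I}

section FremlinAux

variable {R : Type*} [ConditionallyCompleteLattice R] [AddCommGroup R]
    [CovariantClass R R (· + ·) (· ≤ ·)]

private def flOACM (R : Type*) [ConditionallyCompleteLattice R] [AddCommGroup R]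
    [CovariantClass R R (· + ·) (· ≤ ·)] : IsOrderedAddMonoid R :=
  { add_le_add_left := fun a b h c => by
      rw [add_comm a c, add_comm b c]; exact CovariantClass.elim c h }

attribute [local instance] flOACM

private lemma fl_inf_translate {v S t : R} (ht : t ≤ S) : v ⊓ S - S + t ≤ v ⊓ t := by
  refine le_inf ?_ ?_
  · rw [sub_add_eq_add_sub, sub_le_iff_le_add]
    exact add_le_add inf_le_left ht
  · rw [sub_add_eq_add_sub, sub_le_iff_le_add, add_comm t S]
    exact add_le_add inf_le_right le_rfl

private lemma fl_add_ciSup {ι : Sort*} [Nonempty ι] (c : R) (f : ι → R)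
    (hf : BddAbove (Set.range f)) : c + (⨆ i, f i) = ⨆ i, c + f i := by
  obtain ⟨w, hw⟩ := hf
  have hbdd : BddAbove (Set.range fun i => c + f i) :=
    ⟨c + w, by rintro _ ⟨i, rfl⟩; exact add_le_add_right (hw ⟨i, rfl⟩) c⟩
  apply le_antisymm
  · have h1 : ∀ i, f i ≤ -c + ⨆ i, c + f i := fun i => by
      have h2 := le_ciSup hbdd i
      calc f i = -c + (c + f i) := by abel
        _ ≤ -c + ⨆ i, c + f i := add_le_add_right h2 _
    calc c + ⨆ i, f i ≤ c + (-c + ⨆ i, c + f i) := add_le_add_right (ciSup_le h1) c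
      _ = ⨆ i, c + f i := by abel
  · exact ciSup_le fun i => add_le_add_right (le_ciSup ⟨w, hw⟩ i) c

private lemma fl_inf_ciSup_le {ι : Sort*} [Nonempty ι] (u : R) (f : ι → R)
    (hf : BddAbove (Set.range f)) : u ⊓ (⨆ i, f i) ≤ ⨆ i, u ⊓ f i := by
  have hbdd2 : BddAbove (Set.range fun i => u ⊓ f i) :=
    ⟨u, by rintro _ ⟨i, rfl⟩; exact inf_le_left⟩
  calc u ⊓ (⨆ i, f i) = (u ⊓ (⨆ i, f i) - (⨆ i, f i)) + (⨆ i, f i) := by abel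
    _ = ⨆ i, (u ⊓ (⨆ i, f i) - (⨆ i, f i) + f i) := fl_add_ciSup _ _ hf
    _ ≤ ⨆ i, u ⊓ f i := ciSup_mono hbdd2 fun i => fl_inf_translate (le_ciSup hf i)

private lemma fl_inf_sup_le (u p q : R) : u ⊓ (p ⊔ q) ≤ (u ⊓ p) ⊔ (u ⊓ q) := by
  have h1 : u ⊓ (p ⊔ q) - (p ⊔ q) + p ≤ u ⊓ p := fl_inf_translate le_sup_left
  have h2 : u ⊓ (p ⊔ q) - (p ⊔ q) + q ≤ u ⊓ q := fl_inf_translate le_sup_right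
  calc u ⊓ (p ⊔ q) = (u ⊓ (p ⊔ q) - (p ⊔ q)) + (p ⊔ q) := by abel
    _ = (u ⊓ (p ⊔ q) - (p ⊔ q) + p) ⊔ (u ⊓ (p ⊔ q) - (p ⊔ q) + q) := add_sup _ _ _
    _ ≤ (u ⊓ p) ⊔ (u ⊓ q) := sup_le_sup h1 h2

private lemma fl_add_le_two_nsmul_sup (p q : R) : p + q ≤ (2 • p) ⊔ (2 • q) := by
  have habs : (0 : R) ≤ (p - q) ⊔ -(p - q) := abs_nonneg (p - q)
  have hkey : (2 • p) ⊔ (2 • q) = (p + q) + ((p - q) ⊔ -(p - q)) := by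
    rw [add_sup, two_nsmul, two_nsmul]
    congr 1 <;> abel
  rw [hkey]
  exact le_add_of_nonneg_right habs

private lemma fl_ciInf_add (f g : ℕ → R) (hf0 : ∀ j, 0 ≤ f j) (hg0 : ∀ j, 0 ≤ g j)
    (hfd : ∀ j, f (j + 1) ≤ f j) (hgd : ∀ j, g (j + 1) ≤ g j)
    (hfi : (⨅ j, f j) = 0) (hgi : (⨅ j, g j) = 0) : (⨅ j, (f j + g j)) = 0 := by
  have hfa : Antitone f := antitone_nat_of_succ_le hfd
  have hga : Antitone g := antitone_nat_of_succ_le hgd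
  refine le_antisymm ?_ (le_ciInf fun j => add_nonneg (hf0 j) (hg0 j))
  have hbdd : BddBelow (Set.range fun j => f j + g j) :=
    ⟨0, by rintro _ ⟨j, rfl⟩; exact add_nonneg (hf0 j) (hg0 j)⟩
  set c := ⨅ j, (f j + g j) with hc
  have hcle : ∀ j, c ≤ f j + g j := fun j => ciInf_le hbdd j
  have key : ∀ n, c - g n ≤ 0 := by
    intro n
    have hlow : ∀ j, c - g n ≤ f j := by
      intro j
      rcases le_or_gt n j with hnj | hjn
      · calc c - g n ≤ c - g j := sub_le_sub_left (hga hnj) c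
          _ ≤ f j := sub_le_iff_le_add.mpr (hcle j)
      · calc c - g n ≤ f n := sub_le_iff_le_add.mpr (hcle n)
          _ ≤ f j := hfa hjn.le
    have h2 : c - g n ≤ ⨅ j, f j := le_ciInf hlow
    rwa [hfi] at h2
  have hcg : ∀ n, c ≤ g n := fun n => sub_nonpos.mp (key n)
  calc c ≤ ⨅ n, g n := le_ciInf hcg
    _ = 0 := hgi

private lemma fl_ciInf_nsmul (f : ℕ → R) (hf0 : ∀ j, 0 ≤ f j)
    (hfd : ∀ j, f (j + 1) ≤ f j) (hfi : (⨅ j, f j) = 0) (n : ℕ) :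
    (⨅ j, n • f j) = 0 := by
  induction n with
  | zero => simpa using ciInf_const (x := (0 : R))
  | succ n ih =>
    simp_rw [succ_nsmul]
    exact fl_ciInf_add (fun j => n • f j) f (fun j => nsmul_nonneg (hf0 j) n) hf0
      (fun j => nsmul_le_nsmul_right (hfd j) n) hfd ih hfi

private lemma fl_ciInf_sum (m : ℕ) (h : ℕ → ℕ → R) (h0 : ∀ k j, 0 ≤ h k j)
    (hd : ∀ k j, h k (j + 1) ≤ h k j) (hi : ∀ k, (⨅ j, h k j) = 0) :
    (⨅ j, ∑ k ∈ Finset.range m, h k j) = 0 := by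
  induction m with
  | zero => simpa using ciInf_const (x := (0 : R))
  | succ m ih =>
    simp_rw [Finset.sum_range_succ]
    exact fl_ciInf_add _ _ (fun j => Finset.sum_nonneg fun k _ => h0 k j) (h0 m)
      (fun j => Finset.sum_le_sum fun k _ => hd k j) (hd m) ih (hi m)

private lemma fl_key (u B : R) (hB : 0 ≤ B) :
    ∀ (s n : ℕ) (x : ℕ → R), (∀ k, 0 ≤ x k) →
      (∀ k < s, u ⊓ ((2 ^ (k + 1) * n) • x k) ≤ B) →
      u ⊓ (n • ∑ k ∈ Finset.range s, x k) ≤ B := by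
  intro s
  induction s with
  | zero => intro n x _ _; simpa using inf_le_right.trans hB
  | succ s ih =>
    intro n x hx h
    rw [Finset.sum_range_succ', smul_add]
    have h2 := fl_add_le_two_nsmul_sup (n • ∑ k ∈ Finset.range s, x (k + 1)) (n • x 0)
    refine (inf_le_inf_left u h2).trans ?_
    refine (fl_inf_sup_le u _ _).trans (sup_le ?_ ?_)
    · rw [smul_smul]
      exact ih (2 * n) (fun k => x (k + 1)) (fun k => hx (k + 1))
        (fun k hk => by
          have := h (k + 1) (Nat.succ_lt_succ hk)
          rwa [show 2 ^ (k + 1 + 1) * n = 2 ^ (k + 1) * (2 * n) by ring] at this)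
    · rw [smul_smul]
      have := h 0 (Nat.succ_pos s)
      rwa [show 2 ^ (0 + 1) * n = 2 * n by ring] at this

end FremlinAux

/-- **Fremlin's Lemma.** Given a countable family of `(D)`-sequences in a Dedekind complete
Riesz space `R` and `u ≥ 0`, there is a single `(D)`-sequence dominating, after taking the
infimum with `u`, all finite sums `Σ_{k=1}^{s} ⨆ i, a k i (φ (i+k))`. -/
theorem fremlin_lemma {R : Type*} [ConditionallyCompleteLattice R] [AddCommGroup R]
    [Module ℝ R] [CovariantClass R R (· + ·) (· ≤ ·)]
    (a : ℕ → ℕ → ℕ → R) (ha : ∀ k, IsDSeq (a k)) (u : R) (hu : 0 ≤ u) :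
    ∃ b : ℕ → ℕ → R, IsDSeq b ∧ ∀ (φ : ℕ → ℕ) (s : ℕ),
      u ⊓ (∑ k ∈ Finset.range s, ⨆ i, a k i (φ (i + k + 1))) ≤ ⨆ i, b i (φ i) := by
  classical
  letI : IsOrderedAddMonoid R := flOACM R
  choose w hw using fun k => (ha k).1
  set b : ℕ → ℕ → R := fun m j => u ⊓ ∑ k ∈ Finset.range m, (2 ^ (k + 1)) • a k (m - k - 1) j
    with hb
  have hbnn : ∀ m j, 0 ≤ b m j := fun m j =>
    le_inf hu (Finset.sum_nonneg fun k _ => nsmul_nonneg ((ha k).2.1 _ _) _)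
  refine ⟨b, ⟨⟨u, fun m j => inf_le_left⟩, hbnn, ?_, ?_⟩, ?_⟩
  · intro m j
    exact inf_le_inf_left u
      (Finset.sum_le_sum fun k _ => nsmul_le_nsmul_right ((ha k).2.2.1 _ j) _)
  · intro m
    have hS : (⨅ j, ∑ k ∈ Finset.range m, (2 ^ (k + 1)) • a k (m - k - 1) j) = 0 :=
      fl_ciInf_sum m _ (fun k j => nsmul_nonneg ((ha k).2.1 _ _) _)
        (fun k j => nsmul_le_nsmul_right ((ha k).2.2.1 _ j) _)
        (fun k => fl_ciInf_nsmul _ ((ha k).2.1 _) ((ha k).2.2.1 _) ((ha k).2.2.2 _) _)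
    refine le_antisymm ?_ (le_ciInf fun j => hbnn m j)
    calc (⨅ j, b m j) ≤ ⨅ j, ∑ k ∈ Finset.range m, (2 ^ (k + 1)) • a k (m - k - 1) j := by
          refine ciInf_mono ⟨0, ?_⟩ fun j => inf_le_right
          rintro _ ⟨j, rfl⟩; exact hbnn m j
      _ = 0 := hS
  · intro φ s
    set x : ℕ → ℕ → R := fun k i => a k i (φ (i + k + 1)) with hx
    have hxb : ∀ k, BddAbove (Set.range (x k)) := fun k =>
      ⟨w k, by rintro _ ⟨i, rfl⟩; exact hw k i _⟩
    have hxnn : ∀ k i, 0 ≤ x k i := fun k i => (ha k).2.1 _ _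
    have hBdd : BddAbove (Set.range fun m => b m (φ m)) :=
      ⟨u, by rintro _ ⟨m, rfl⟩; exact inf_le_left⟩
    set B := ⨆ m, b m (φ m) with hBdef
    have hB0 : 0 ≤ B := (hbnn 0 (φ 0)).trans (le_ciSup hBdd 0)
    have step1 : ∀ k i, u ⊓ ((2 ^ (k + 1)) • x k i) ≤ B := by
      intro k i
      have hmem : k ∈ Finset.range (i + k + 1) := Finset.mem_range.mpr (by omega)
      have h1 : (2 ^ (k + 1)) • x k i ≤
          ∑ k' ∈ Finset.range (i + k + 1), (2 ^ (k' + 1)) • a k' (i + k + 1 - k' - 1)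
            (φ (i + k + 1)) := by
        have := Finset.single_le_sum
          (f := fun k' => (2 ^ (k' + 1)) • a k' (i + k + 1 - k' - 1) (φ (i + k + 1)))
          (fun k' _ => nsmul_nonneg ((ha k').2.1 _ _) _) hmem
        simpa [show i + k + 1 - k - 1 = i by omega, hx] using this
      exact (inf_le_inf_left u h1).trans (le_ciSup hBdd (i + k + 1))
    have hIstep : ∀ I : ℕ → ℕ, u ⊓ (∑ k ∈ Finset.range s, x k (I k)) ≤ B := by
      intro I
      have := fl_key u B hB0 s 1 (fun k => x k (I k)) (fun k => hxnn k (I k))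
        (fun k hk => by simpa [mul_one] using step1 k (I k))
      simpa using this
    have G : ∀ (t : ℕ) (v D : R), (∀ I : ℕ → ℕ, v ⊓ (∑ k ∈ Finset.range t, x k (I k)) ≤ D) →
        v ⊓ (∑ k ∈ Finset.range t, ⨆ i, x k i) ≤ D := by
      intro t
      induction t with
      | zero => intro v D h; simpa using h id
      | succ t ih =>
        intro v D h
        have hrw : (∑ k ∈ Finset.range t, ⨆ i, x k i) + (⨆ i, x t i)
            = ⨆ i, ((∑ k ∈ Finset.range t, ⨆ i, x k i) + x t i) := fl_add_ciSup _ _ (hxb t)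
        rw [Finset.sum_range_succ, hrw]
        have hbddC : BddAbove (Set.range fun i => (∑ k ∈ Finset.range t, ⨆ i', x k i') + x t i) := by
          refine ⟨(∑ k ∈ Finset.range t, ⨆ i', x k i') + w t, ?_⟩
          rintro _ ⟨i, rfl⟩
          exact add_le_add_right (hw t i _) _
        refine (fl_inf_ciSup_le v _ hbddC).trans (ciSup_le fun i => ?_)
        have key : v ⊓ ((∑ k ∈ Finset.range t, ⨆ i', x k i') + x t i)
            = ((v - x t i) ⊓ (∑ k ∈ Finset.range t, ⨆ i', x k i')) + x t i := by
          rw [inf_add, sub_add_cancel]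
        rw [key, ← le_sub_iff_add_le]
        refine ih (v - x t i) (D - x t i) fun I => ?_
        rw [le_sub_iff_add_le, inf_add, sub_add_cancel]
        have hsum : ∑ k ∈ Finset.range (t + 1), x k (Function.update I t i k)
            = (∑ k ∈ Finset.range t, x k (I k)) + x t i := by
          rw [Finset.sum_range_succ, Function.update_self]
          congr 1
          refine Finset.sum_congr rfl fun k hk => ?_
          rw [Function.update_of_ne (Finset.mem_range.mp hk).ne]
        have := h (Function.update I t i)
        rwa [hsum] at this
    exact G s u B hIstep
end

section
/- Let R be a Dedekind complete weakly σ-distributive Riesz space, (T,d) a compact metric space, Σ the σ-algebra of Borel subsets of T, and μ : Σ → R a positive finitely additive set function which is regular. Then μ is σ-additive: for every sequence (A_k)_k of pairwise disjoint sets in Σ, μ(⋃_k A_k) = Σ_{k=1}^{∞} μ(A_k), where the series is the (D)-limit (equivalently order limit) of its partial sums. -/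
open scoped BigOperators

section AuxR
variable {R : Type*} [ConditionallyCompleteLattice R] [AddCommGroup R]
  [CovariantClass R R (· + ·) (· ≤ ·)]

private lemma myAdd_le_two_nsmul_sup (x y : R) : x + y ≤ (2 • x) ⊔ (2 • y) := by
  have h : (2 • x) ⊔ (2 • y) - (x + y) = (x - y) ⊔ (y - x) := by
    rw [sup_sub]
    congr 1 <;> [skip; skip] <;> · rw [two_nsmul]; abel
  have h2 : (0:R) ≤ (x - y) ⊔ (y - x) := by
    have := abs_nonneg (x - y)
    have habs : |x - y| = (x - y) ⊔ (y - x) := by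
      rw [abs]
      congr 1
      abel
    rwa [habs] at this
  have := h2.trans_eq h.symm
  exact sub_nonneg.mp this

private lemma mySum_nonneg {s : Finset ℕ} {f : ℕ → R} (h : ∀ p, 0 ≤ f p) :
    0 ≤ ∑ p ∈ s, f p := by
  classical
  induction s using Finset.induction_on with
  | empty => simp
  | @insert _ _ hx ih => rw [Finset.sum_insert hx]; exact add_nonneg (h _) ih

private lemma mySum_le_sum {s : Finset ℕ} {f g : ℕ → R} (h : ∀ p ∈ s, f p ≤ g p) :
    ∑ p ∈ s, f p ≤ ∑ p ∈ s, g p := by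
  classical
  induction s using Finset.induction_on with
  | empty => simp
  | @insert a s hx ih =>
    rw [Finset.sum_insert hx, Finset.sum_insert hx]
    exact add_le_add (h a (by simp)) (ih fun p hp => h p (by simp [hp]))

private lemma myNsmul_nonneg {x : R} (h : 0 ≤ x) (n : ℕ) : 0 ≤ n • x := by
  induction n with
  | zero => simp
  | succ n ih => rw [succ_nsmul]; exact add_nonneg ih h

private lemma mySingle_le_sum {s : Finset ℕ} {f : ℕ → R} (h : ∀ p, 0 ≤ f p)
    {a : ℕ} (ha : a ∈ s) : f a ≤ ∑ p ∈ s, f p := by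
  classical
  rw [← Finset.add_sum_erase s f ha]
  exact le_add_of_nonneg_right (mySum_nonneg h)

/-- infinite inf-sup distributivity inequality in a conditionally complete lattice group -/
private lemma myInf_ciSup_le {ι : Sort*} [Nonempty ι] (u : R) (f : ι → R)
    (hb : BddAbove (Set.range f)) : u ⊓ (⨆ i, f i) ≤ ⨆ i, u ⊓ f i := by
  have hb2 : BddAbove (Set.range fun i => u ⊓ f i) :=
    ⟨u, by rintro _ ⟨i, rfl⟩; exact inf_le_left⟩
  set S := ⨆ i, f i with hS
  set s := ⨆ i, u ⊓ f i with hs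
  have key : ∀ i, f i ≤ s - u + (u ⊔ S) := by
    intro i
    have h1 : f i = (u ⊓ f i) + (u ⊔ f i) - u := by rw [inf_add_sup]; abel
    have h2 : u ⊔ f i ≤ u ⊔ S := sup_le_sup_left (le_ciSup hb i) u
    have h3 : u ⊓ f i ≤ s := le_ciSup hb2 i
    rw [h1]
    calc (u ⊓ f i) + (u ⊔ f i) - u ≤ s + (u ⊔ S) - u := by
          have := add_le_add h3 h2
          exact sub_le_sub_right this u
      _ = s - u + (u ⊔ S) := by abel
  have hkey : S ≤ s - u + (u ⊔ S) := ciSup_le key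
  have h4 : u ⊓ S = u + S - (u ⊔ S) := by rw [← inf_add_sup]; abel
  rw [h4]
  have := add_le_add_right hkey u
  calc u + S - (u ⊔ S) ≤ u + (s - u + (u ⊔ S)) - (u ⊔ S) := sub_le_sub_right this _
    _ = s := by abel

private lemma myInf_sup_le (u a b : R) : u ⊓ (a ⊔ b) ≤ (u ⊓ a) ⊔ (u ⊓ b) := by
  set s := (u ⊓ a) ⊔ (u ⊓ b) with hs
  have key : ∀ x : R, x ≤ a ⊔ b → u ⊓ x ≤ s → x ≤ s - u + (u ⊔ (a ⊔ b)) := by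
    intro x hx hux
    have h1 : x = (u ⊓ x) + (u ⊔ x) - u := by rw [inf_add_sup]; abel
    have h2 : u ⊔ x ≤ u ⊔ (a ⊔ b) := sup_le_sup_left hx u
    rw [h1]
    calc (u ⊓ x) + (u ⊔ x) - u ≤ s + (u ⊔ (a ⊔ b)) - u := sub_le_sub_right (add_le_add hux h2) u
      _ = s - u + (u ⊔ (a ⊔ b)) := by abel
  have hab : a ⊔ b ≤ s - u + (u ⊔ (a ⊔ b)) :=
    sup_le (key a le_sup_left le_sup_left) (key b le_sup_right le_sup_right)
  have h4 : u ⊓ (a ⊔ b) = u + (a ⊔ b) - (u ⊔ (a ⊔ b)) := by rw [← inf_add_sup]; abel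
  rw [h4]
  have := add_le_add_right hab u
  calc u + (a ⊔ b) - (u ⊔ (a ⊔ b)) ≤ u + (s - u + (u ⊔ (a ⊔ b))) - (u ⊔ (a ⊔ b)) :=
        sub_le_sub_right this _
    _ = s := by abel

/-- key weighted bound: `u ⊓ (x₀ + ⋯ + x_q) ≤ W` provided `u ⊓ 2^(p+1)•x_p ≤ W`. -/
private lemma myInf_sum_le (u W : R) : ∀ (q : ℕ) (x : ℕ → R), (∀ p, 0 ≤ x p) →
    (∀ p, p ≤ q → u ⊓ ((2^(p+1)) • x p) ≤ W) →
    u ⊓ (∑ p ∈ Finset.range (q+1), x p) ≤ W := by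
  intro q
  induction q with
  | zero =>
    intro x hx h
    rw [Finset.sum_range_one]
    refine le_trans (inf_le_inf_left u ?_) (h 0 le_rfl)
    rw [pow_one, two_nsmul]
    exact le_add_of_nonneg_left (hx 0)
  | succ q ih =>
    intro x hx h
    rw [Finset.sum_range_succ']
    have step1 : x 0 + ∑ p ∈ Finset.range (q+1), x (p+1)
        ≤ (2 • x 0) ⊔ (2 • ∑ p ∈ Finset.range (q+1), x (p+1)) := by
      rw [add_comm]
      exact le_trans (le_of_eq (add_comm _ _)) (myAdd_le_two_nsmul_sup _ _)
    have step2 : u ⊓ (∑ p ∈ Finset.range (q+1), x (p+1) + x 0) ≤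
        (u ⊓ (2 • x 0)) ⊔ (u ⊓ (2 • ∑ p ∈ Finset.range (q+1), x (p+1))) := by
      refine le_trans (inf_le_inf_left u ?_) (myInf_sup_le _ _ _)
      rw [add_comm]; exact step1
    refine step2.trans (sup_le ?_ ?_)
    · have := h 0 (Nat.zero_le _)
      rwa [pow_one] at this
    · rw [Finset.smul_sum]
      refine ih (fun p => 2 • x (p+1)) (fun p => myNsmul_nonneg (hx _) 2) ?_
      intro p hp
      have : (2^(p+1)) • (2 • x (p+1)) = (2^(p+2)) • x (p+1) := by
        rw [smul_smul, ← pow_succ]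
      rw [this]
      exact h (p+1) (by omega)

/-- inf over j of a finite sum of antitone sequences each with infimum 0 is 0 -/
private lemma myInf_add_zero (g h : ℕ → R) (hg0 : ∀ j, 0 ≤ g j) (hh0 : ∀ j, 0 ≤ h j)
    (hga : ∀ j k, j ≤ k → g k ≤ g j) (hha : ∀ j k, j ≤ k → h k ≤ h j)
    (hg : ⨅ j, g j = 0) (hh : ⨅ j, h j = 0) : ⨅ j, (g j + h j) = 0 := by
  have hbb : BddBelow (Set.range fun j => g j + h j) :=
    ⟨0, by rintro _ ⟨j, rfl⟩; exact add_nonneg (hg0 j) (hh0 j)⟩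
  refine le_antisymm ?_ (le_ciInf fun j => add_nonneg (hg0 j) (hh0 j))
  have key : ∀ k, (⨅ j, (g j + h j)) ≤ h k := by
    intro k
    have h1 : ∀ j, (⨅ j, (g j + h j)) - h k ≤ g j := by
      intro j
      have h2 : (⨅ j, (g j + h j)) ≤ g (max j k) + h (max j k) := ciInf_le hbb (max j k)
      have h3 : g (max j k) + h (max j k) ≤ g j + h k :=
        add_le_add (hga j _ (le_max_left _ _)) (hha k _ (le_max_right _ _))
      have h4 : (⨅ j, (g j + h j)) ≤ g j + h k := h2.trans h3
      exact sub_le_iff_le_add.mpr ((le_of_eq rfl).trans h4)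
    have h4 : (⨅ j, (g j + h j)) - h k ≤ ⨅ j, g j := le_ciInf h1
    rw [hg] at h4
    exact sub_nonpos.mp h4
  have h5 : (⨅ j, (g j + h j)) ≤ ⨅ k, h k := le_ciInf key
  rw [hh] at h5
  exact h5

private lemma myInf_sum_zero (m : ℕ) (f : ℕ → ℕ → R) (h0 : ∀ p j, 0 ≤ f p j)
    (hanti : ∀ p j k, j ≤ k → f p k ≤ f p j) (hz : ∀ p, ⨅ j, f p j = 0) :
    ⨅ j, ∑ p ∈ Finset.range m, f p j = 0 := by
  induction m with
  | zero => simp [ciInf_const]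
  | succ m ih =>
    have : ∀ j, ∑ p ∈ Finset.range (m+1), f p j
        = (∑ p ∈ Finset.range m, f p j) + f m j := by
      intro j; rw [Finset.sum_range_succ]
    simp only [this]
    exact myInf_add_zero _ _ (fun j => mySum_nonneg fun p => h0 p j) (fun j => h0 m j)
      (fun j k hjk => mySum_le_sum fun p _ => hanti p j k hjk) (fun j k hjk => hanti m j k hjk)
      ih (hz m)

private lemma myAdd_ciSup_le {ι : Sort*} [Nonempty ι] (c : R) (f : ι → R) (B : R)
    (hB : ∀ i, f i ≤ B) : c + (⨆ i, f i) ≤ ⨆ i, (c + f i) := by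
  have hb2 : BddAbove (Set.range fun i => c + f i) :=
    ⟨c + B, by rintro _ ⟨i, rfl⟩; exact add_le_add_right (hB i) c⟩
  have h1 : ∀ i, f i ≤ (⨆ i, (c + f i)) - c := fun i =>
    le_sub_iff_add_le.mpr (by rw [add_comm]; exact le_ciSup hb2 i)
  have h2 : (⨆ i, f i) ≤ (⨆ i, (c + f i)) - c := ciSup_le h1
  calc c + (⨆ i, f i) ≤ c + ((⨆ i, (c + f i)) - c) := add_le_add_right h2 c
    _ = ⨆ i, (c + f i) := by abel

private lemma myCiSup_add_le {ι : Sort*} [Nonempty ι] (c : R) (f : ι → R) (B : R)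
    (hB : ∀ i, f i ≤ B) : (⨆ i, f i) + c ≤ ⨆ i, (f i + c) := by
  have := myAdd_ciSup_le c f B hB
  calc (⨆ i, f i) + c = c + (⨆ i, f i) := by abel
    _ ≤ ⨆ i, (c + f i) := this
    _ = ⨆ i, (f i + c) := by congr 1; funext i; abel

/-- sum of sups is at most sup over tuples of sums -/
private lemma mySum_ciSup_le (n : ℕ) (F : ℕ → ℕ → R) (B : ℕ → R) (hFB : ∀ p k, F p k ≤ B p) :
    ∑ p ∈ Finset.range n, (⨆ k, F p k) ≤ ⨆ t : ℕ → ℕ, ∑ p ∈ Finset.range n, F p (t p) := by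
  induction n with
  | zero => simp [ciSup_const]
  | succ n ih =>
    have hbt : ∀ (m : ℕ) (t : ℕ → ℕ), ∑ p ∈ Finset.range m, F p (t p)
        ≤ ∑ p ∈ Finset.range m, B p := fun m t => mySum_le_sum fun p _ => hFB p (t p)
    rw [Finset.sum_range_succ]
    have step1 : (∑ p ∈ Finset.range n, ⨆ k, F p k) + (⨆ k, F n k)
        ≤ (⨆ t : ℕ → ℕ, ∑ p ∈ Finset.range n, F p (t p)) + (⨆ k, F n k) :=
      add_le_add_left ih _
    refine step1.trans ?_
    have step2 : (⨆ t : ℕ → ℕ, ∑ p ∈ Finset.range n, F p (t p)) + (⨆ k, F n k)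
        ≤ ⨆ k, ((⨆ t : ℕ → ℕ, ∑ p ∈ Finset.range n, F p (t p)) + F n k) :=
      myAdd_ciSup_le _ _ (B n) (fun k => hFB n k)
    refine step2.trans (ciSup_le fun k => ?_)
    have step3 : (⨆ t : ℕ → ℕ, ∑ p ∈ Finset.range n, F p (t p)) + F n k
        ≤ ⨆ t : ℕ → ℕ, (∑ p ∈ Finset.range n, F p (t p) + F n k) :=
      myCiSup_add_le _ _ (∑ p ∈ Finset.range n, B p) (fun t => hbt n t)
    refine step3.trans (ciSup_le fun t => ?_)
    have hb : BddAbove (Set.range fun t : ℕ → ℕ => ∑ p ∈ Finset.range (n+1), F p (t p)) :=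
      ⟨∑ p ∈ Finset.range (n+1), B p, by rintro _ ⟨t, rfl⟩; exact hbt (n+1) t⟩
    have heq : ∑ p ∈ Finset.range n, F p (t p) + F n k
        = ∑ p ∈ Finset.range (n+1), F p (Function.update t n k p) := by
      rw [Finset.sum_range_succ, Function.update_self]
      congr 1
      refine Finset.sum_congr rfl fun p hp => ?_
      rw [Function.update_of_ne (by simp at hp; omega)]
    rw [heq]
    exact le_ciSup hb _


private lemma myInf_nsmul_zero (n : ℕ) (g : ℕ → R) (h0 : ∀ j, 0 ≤ g j)
    (hanti : ∀ j k, j ≤ k → g k ≤ g j) (hz : ⨅ j, g j = 0) : ⨅ j, n • g j = 0 := by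
  have h := myInf_sum_zero n (fun _ j => g j) (fun _ j => h0 j)
    (fun _ j k hjk => hanti j k hjk) (fun _ => hz)
  simpa [Finset.sum_const, Finset.card_range] using h

end AuxR

/-- A positive, finitely additive, regular set function on the Borel σ-algebra of a compact
metric space, with values in a Dedekind complete weakly σ-distributive Riesz space, is
σ-additive: for pairwise disjoint Borel sets `A k`, the partial sums of `Σ_k μ(A k)`
`(D)`-converge to `μ(⋃ k, A k)`. -/
theorem regular_sigma_additive {R : Type*} [ConditionallyCompleteLattice R] [AddCommGroup R]
    [Module ℝ R] [CovariantClass R R (· + ·) (· ≤ ·)]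
    {T : Type*} [MetricSpace T] [CompactSpace T] [MeasurableSpace T] [BorelSpace T]
    (hR : WeaklySigmaDistrib R)
    (μ : Set T → R)
    (hpos : ∀ E : Set T, MeasurableSet E → 0 ≤ μ E)
    (hadd : ∀ A B : Set T, MeasurableSet A → MeasurableSet B → Disjoint A B →
      μ (A ∪ B) = μ A + μ B)
    (hreg : IsRegularSetFn μ)
    (A : ℕ → Set T) (hA : ∀ k, MeasurableSet (A k))
    (hdisj : Pairwise (Function.onFun Disjoint A)) :
    DConv (fun n => ∑ k ∈ Finset.range n, μ (A k)) (μ (⋃ k, A k)) := by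
    classical
  -- basic measure lemmas
  have hμempty : μ ∅ = 0 := by
    have h := hadd ∅ ∅ MeasurableSet.empty MeasurableSet.empty disjoint_bot_left
    rw [Set.union_empty] at h
    have h2 : μ (∅ : Set T) + 0 = μ (∅ : Set T) + μ (∅ : Set T) := by rw [add_zero]; exact h
    exact (add_left_cancel h2).symm
  have hmono : ∀ X Y : Set T, MeasurableSet X → MeasurableSet Y → X ⊆ Y → μ X ≤ μ Y := by
    intro X Y hX hY hXY
    have h := hadd X (Y \ X) hX (hY.diff hX) Set.disjoint_sdiff_right
    rw [Set.union_diff_cancel hXY] at h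
    rw [h]
    exact le_add_of_nonneg_right (hpos _ (hY.diff hX))
  have hsubadd : ∀ X Y : Set T, MeasurableSet X → MeasurableSet Y → μ (X ∪ Y) ≤ μ X + μ Y := by
    intro X Y hX hY
    have h := hadd X (Y \ X) hX (hY.diff hX) Set.disjoint_sdiff_right
    rw [Set.union_diff_self] at h
    rw [h]
    exact add_le_add_right (hmono _ _ (hY.diff hX) hY Set.diff_subset) _
  have hbUnion : ∀ (m : ℕ) (D : ℕ → Set T), (∀ p, MeasurableSet (D p)) →
      μ (⋃ p ∈ Finset.range m, D p) ≤ ∑ p ∈ Finset.range m, μ (D p) := by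
    intro m D hD
    induction m with
    | zero => simp [hμempty]
    | succ m ih =>
      rw [Finset.sum_range_succ]
      have hun : (⋃ p ∈ Finset.range (m+1), D p) = (⋃ p ∈ Finset.range m, D p) ∪ D m := by
        rw [Finset.range_add_one, Finset.set_biUnion_insert]
        rw [Set.union_comm]
      rw [hun]
      exact (hsubadd _ _ (Finset.measurableSet_biUnion _ fun p _ => hD p) (hD m)).trans
        (add_le_add_left ih _)
  -- the sets
  set E : Set T := ⋃ k, A k with hEdef
  have hEmeas : MeasurableSet E := MeasurableSet.iUnion hA
  set Bn : ℕ → Set T := fun n => ⋃ k ∈ Finset.range n, A k with hBdef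
  have hBmeas : ∀ n, MeasurableSet (Bn n) :=
    fun n => Finset.measurableSet_biUnion _ fun k _ => hA k
  have hBsub : ∀ n, Bn n ⊆ E := fun n => Set.iUnion₂_subset fun k _ => Set.subset_iUnion A k
  set Cn : ℕ → Set T := fun n => E \ Bn n with hCdef
  have hCmeas : ∀ n, MeasurableSet (Cn n) := fun n => hEmeas.diff (hBmeas n)
  set d : ℕ → R := fun n => μ (Cn n) with hddef
  set u : R := μ Set.univ with hudef
  have hu0 : 0 ≤ u := hpos _ MeasurableSet.univ
  have hCanti : ∀ n m : ℕ, n ≤ m → Cn m ⊆ Cn n := by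
    intro n m hnm
    refine Set.diff_subset_diff_right ?_
    refine Set.biUnion_subset_biUnion_left ?_
    intro k hk
    have hk' : k < n := Finset.mem_range.mp hk
    exact Finset.mem_range.mpr (lt_of_lt_of_le hk' hnm)
  have hd0 : ∀ n, 0 ≤ d n := fun n => hpos _ (hCmeas n)
  have hdanti : ∀ n m : ℕ, n ≤ m → d m ≤ d n :=
    fun n m h => hmono _ _ (hCmeas m) (hCmeas n) (hCanti n m h)
  have hdu : ∀ n, d n ≤ u :=
    fun n => hmono _ _ (hCmeas n) MeasurableSet.univ (Set.subset_univ _)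
  have hμB : ∀ n, μ (Bn n) = ∑ k ∈ Finset.range n, μ (A k) := by
    intro n
    induction n with
    | zero => simp [hBdef, hμempty]
    | succ n ih =>
      have hdisjB : Disjoint (A n) (Bn n) := by
        simp only [hBdef, Set.disjoint_iUnion_right]
        intro k hk
        exact hdisj (by simp at hk; omega : n ≠ k)
      have hun : Bn (n+1) = A n ∪ Bn n := by
        simp only [hBdef]
        rw [Finset.range_add_one, Finset.set_biUnion_insert]
      rw [hun, hadd _ _ (hA n) (hBmeas n) hdisjB, ih, Finset.sum_range_succ, add_comm]
  have hEeq : ∀ n, μ E = μ (Bn n) + d n := by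
    intro n
    have h := hadd (Bn n) (Cn n) (hBmeas n) (hCmeas n) Set.disjoint_sdiff_right
    rw [Set.union_diff_cancel (hBsub n)] at h
    exact h
  have hbbd : BddBelow (Set.range d) := ⟨0, by rintro _ ⟨n, rfl⟩; exact hd0 n⟩
  set L : R := ⨅ n, d n with hLdef
  have hL0 : 0 ≤ L := le_ciInf hd0
  -- regulators for the sets Cn p
  have hregC : ∀ p : ℕ, ∃ a : ℕ → ℕ → R, IsDSeq a ∧
      ∀ ψ : ℕ → ℕ, ∃ K U : Set T, IsCompact K ∧ IsOpen U ∧ K ⊆ Cn p ∧ Cn p ⊆ U ∧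
        μ (U \ K) ≤ ⨆ i, a i (ψ i) := fun p => hreg (Cn p) (hCmeas p)
  choose a haD haO using hregC
  choose bnd hbnd using fun p => (haD p).1
  have ha0 : ∀ p i j, 0 ≤ a p i j := fun p => (haD p).2.1
  have hadec : ∀ p i j, a p i (j+1) ≤ a p i j := fun p => (haD p).2.2.1
  have hainf : ∀ p i, (⨅ j, a p i j) = 0 := fun p => (haD p).2.2.2
  have haanti : ∀ p i j k, j ≤ k → a p i k ≤ a p i j := by
    intro p i j k hjk
    induction k, hjk using Nat.le_induction with
    | base => exact le_rfl
    | succ m hm ih => exact (hadec p i m).trans ih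
  -- the combined regulator
  set creg : ℕ → ℕ → R :=
    fun i j => u ⊓ ∑ p ∈ Finset.range (i+1), (2^(p+1)) • a p (i - p) j with hcreg
  have hcreg_nonneg : ∀ i j, 0 ≤ creg i j := by
    intro i j
    exact le_inf hu0 (mySum_nonneg fun p => myNsmul_nonneg (ha0 p _ _) _)
  have hcregD : IsDSeq creg := by
    refine ⟨⟨u, fun i j => inf_le_left⟩, hcreg_nonneg, ?_, ?_⟩
    · intro i j
      exact inf_le_inf_left u
        (mySum_le_sum fun p _ => nsmul_le_nsmul_right (hadec p _ j) _)
    · intro i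
      refine le_antisymm ?_ (le_ciInf fun j => hcreg_nonneg i j)
      have h1 : (⨅ j, creg i j) ≤ ⨅ j, ∑ p ∈ Finset.range (i+1), (2^(p+1)) • a p (i - p) j := by
        refine ciInf_mono ⟨0, by rintro _ ⟨j, rfl⟩; exact hcreg_nonneg i j⟩ ?_
        intro j
        exact inf_le_right
      have h2 : (⨅ j, ∑ p ∈ Finset.range (i+1), (2^(p+1)) • a p (i - p) j) = 0 := by
        refine myInf_sum_zero (i+1) (fun p j => (2^(p+1)) • a p (i - p) j)
          (fun p j => myNsmul_nonneg (ha0 p _ _) _)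
          (fun p j k hjk => nsmul_le_nsmul_right (haanti p _ j k hjk) _) ?_
        intro p
        exact myInf_nsmul_zero _ _ (fun j => ha0 p _ j) (fun j k h => haanti p _ j k h)
          (hainf p (i - p))
      exact h1.trans_eq h2
  -- main claim : L is below every sup of the regulator
  have hLW : ∀ φ : ℕ → ℕ, L ≤ ⨆ i, creg i (φ i) := by
    intro φ
    have hW : BddAbove (Set.range fun i => creg i (φ i)) :=
      ⟨u, by rintro _ ⟨i, rfl⟩; exact inf_le_left⟩
    choose K U hKc hUo hKC hCU hμUK using fun p => haO p (fun k => φ (k + p))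
    have hKmeas : ∀ p, MeasurableSet (K p) := fun p => (hKc p).isClosed.measurableSet
    have hUmeas : ∀ p, MeasurableSet (U p) := fun p => (hUo p).measurableSet
    -- some finite intersection of the compacts is empty
    have hKint : ∃ n, (⋂ p ∈ Finset.range (n+1), K p) = ∅ := by
      by_contra hcon
      push_neg at hcon
      have hne : ∀ n, (⋂ p ∈ Finset.range (n+1), K p).Nonempty := hcon
      have hmono2 : ∀ m n : ℕ, m ≤ n →
          (⋂ p ∈ Finset.range (n+1), K p) ⊆ ⋂ p ∈ Finset.range (m+1), K p := by
        intro m n hmn x hx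
        simp only [Set.mem_iInter] at hx ⊢
        intro p hp
        exact hx p (Finset.mem_range.mpr (lt_of_lt_of_le (Finset.mem_range.mp hp) (by omega)))
      have hdir : Directed (· ⊇ ·) (fun n => ⋂ p ∈ Finset.range (n+1), K p) := by
        intro m n
        exact ⟨max m n, hmono2 m _ (le_max_left m n), hmono2 n _ (le_max_right m n)⟩
      have hcl : ∀ n, IsClosed (⋂ p ∈ Finset.range (n+1), K p) :=
        fun n => isClosed_biInter (fun p _ => (hKc p).isClosed)
      have hcomp : ∀ n, IsCompact (⋂ p ∈ Finset.range (n+1), K p) :=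
        fun n => (hcl n).isCompact
      obtain ⟨x, hx⟩ := IsCompact.nonempty_iInter_of_directed_nonempty_isCompact_isClosed
        _ hdir hne hcomp hcl
      have hxK : ∀ p, x ∈ K p := by
        intro p
        have hxp := Set.mem_iInter.mp hx p
        simp only [Set.mem_iInter] at hxp
        exact hxp p (Finset.mem_range.mpr (by omega))
      have hxC : ∀ p, x ∈ Cn p := fun p => hKC p (hxK p)
      have hxE : x ∈ E := (hxC 0).1
      obtain ⟨k, hk⟩ := Set.mem_iUnion.mp hxE
      have hxB : x ∈ Bn (k+1) := Set.mem_biUnion (Finset.mem_range.mpr (by omega)) hk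
      exact (hxC (k+1)).2 hxB
    obtain ⟨n, hnK⟩ := hKint
    -- covering of Cn n
    have hcov : Cn n ⊆ ⋃ p ∈ Finset.range (n+1), (Cn p \ K p) := by
      intro x hx
      have hxnot : x ∉ ⋂ p ∈ Finset.range (n+1), K p := by
        rw [hnK]; exact Set.notMem_empty x
      simp only [Set.mem_iInter, not_forall] at hxnot
      obtain ⟨p, hp, hpK⟩ := hxnot
      exact Set.mem_biUnion hp
        ⟨hCanti p n (by have := Finset.mem_range.mp hp; omega) hx, hpK⟩
    have hsum : d n ≤ ∑ p ∈ Finset.range (n+1), ⨆ k, a p k (φ (k + p)) := by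
      have h1 : d n ≤ μ (⋃ p ∈ Finset.range (n+1), (Cn p \ K p)) :=
        hmono _ _ (hCmeas n)
          (Finset.measurableSet_biUnion _ fun p _ => (hCmeas p).diff (hKmeas p)) hcov
      have h2 := hbUnion (n+1) (fun p => Cn p \ K p) (fun p => (hCmeas p).diff (hKmeas p))
      have h3 : ∑ p ∈ Finset.range (n+1), μ (Cn p \ K p)
          ≤ ∑ p ∈ Finset.range (n+1), μ (U p \ K p) :=
        mySum_le_sum fun p _ => hmono _ _ ((hCmeas p).diff (hKmeas p))
          ((hUmeas p).diff (hKmeas p)) (Set.diff_subset_diff_left (hCU p))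
      have h4 : ∑ p ∈ Finset.range (n+1), μ (U p \ K p)
          ≤ ∑ p ∈ Finset.range (n+1), ⨆ k, a p k (φ (k + p)) :=
        mySum_le_sum fun p _ => hμUK p
      exact ((h1.trans h2).trans h3).trans h4
    set F : ℕ → ℕ → R := fun p k => a p k (φ (k + p)) with hF
    have hLn : L ≤ u ⊓ ∑ p ∈ Finset.range (n+1), ⨆ k, F p k :=
      le_inf ((ciInf_le hbbd 0).trans (hdu 0)) ((ciInf_le hbbd n).trans hsum)
    have hinter : ∑ p ∈ Finset.range (n+1), (⨆ k, F p k)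
        ≤ ⨆ t : ℕ → ℕ, ∑ p ∈ Finset.range (n+1), F p (t p) :=
      mySum_ciSup_le (n+1) F bnd (fun p k => hbnd p k _)
    have hbt : BddAbove (Set.range fun t : ℕ → ℕ => ∑ p ∈ Finset.range (n+1), F p (t p)) :=
      ⟨∑ p ∈ Finset.range (n+1), bnd p, by
        rintro _ ⟨t, rfl⟩; exact mySum_le_sum fun p _ => hbnd p (t p) _⟩
    have h5 : L ≤ ⨆ t : ℕ → ℕ, (u ⊓ ∑ p ∈ Finset.range (n+1), F p (t p)) := by
      refine ((hLn.trans (inf_le_inf_left u hinter)).trans ?_)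
      exact myInf_ciSup_le u _ hbt
    refine h5.trans (ciSup_le fun t => ?_)
    refine myInf_sum_le u _ n (fun p => F p (t p)) (fun p => ha0 p _ _) ?_
    intro p hp
    have hterm : u ⊓ (2^(p+1)) • F p (t p) ≤ creg (t p + p) (φ (t p + p)) := by
      refine inf_le_inf_left u ?_
      have hmem : p ∈ Finset.range (t p + p + 1) := Finset.mem_range.mpr (by omega)
      have heq : (2^(p+1)) • a p ((t p + p) - p) (φ (t p + p)) = (2^(p+1)) • F p (t p) := by
        have : (t p + p) - p = t p := by omega
        rw [this]
      calc (2^(p+1)) • F p (t p)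
          = (2^(p+1)) • a p ((t p + p) - p) (φ (t p + p)) := heq.symm
        _ ≤ ∑ q ∈ Finset.range (t p + p + 1), (2^(q+1)) • a q ((t p + p) - q) (φ (t p + p)) :=
          mySingle_le_sum (f := fun q => (2^(q+1)) • a q ((t p + p) - q) (φ (t p + p)))
            (fun q => myNsmul_nonneg (ha0 q _ _) _) hmem
    exact hterm.trans (le_ciSup hW (t p + p))
  have hLzero : L = 0 := by
    have h := le_ciInf hLW
    rw [hR creg hcregD] at h
    exact le_antisymm h hL0
  -- conclusion
  refine ⟨fun _ j => d j, ⟨⟨u, fun i j => hdu j⟩, fun i j => hd0 j,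
    fun i j => hdanti j (j+1) (Nat.le_succ j), fun i => by rw [← hLdef]; exact hLzero⟩, ?_⟩
  intro φ
  refine ⟨φ 0, fun n hn => ?_⟩
  have he : (∑ k ∈ Finset.range n, μ (A k)) - μ (⋃ k, A k) = -(d n) := by
    rw [← hμB n, ← hEdef, hEeq n]
    abel
  have hWd : BddAbove (Set.range fun i : ℕ => d (φ i)) :=
    ⟨u, by rintro _ ⟨i, rfl⟩; exact hdu _⟩
  calc |(∑ k ∈ Finset.range n, μ (A k)) - μ (⋃ k, A k)| = |(-(d n))| := by rw [he]
    _ = d n := by rw [abs_neg]; exact abs_of_nonneg (hd0 n)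
    _ ≤ d (φ 0) := hdanti (φ 0) n hn
    _ ≤ ⨆ i, d (φ i) := le_ciSup hWd 0
end

section
/- Let R = c₀₀ be the Riesz space of eventually null real-valued sequences with the pointwise order, and let u_n ∈ c₀₀ denote the sequence whose n-th coordinate is 1 and all other coordinates are 0. Let λ be Lebesgue measure on the Borel subsets of [0,1]. Define f : [0,1] → c₀₀ by f(x) = u_n if x = 1/n for some n ∈ ℕ, and f(x) = 0 otherwise. Then f is not (KH)-integrable on [0,1]; in fact, for every gage δ : [0,1] → (0,∞) the set of Riemann sums { Σ_Π f : Π a δ-fine partition of [0,1] } is not bounded from above in c₀₀. -/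
open MeasureTheory

/-- A `(D)`-sequence (regulator) in `c₀₀ = ℕ →₀ ℝ` (eventually null real sequences with the
pointwise order): a bounded double sequence, nonnegative, decreasing in `j`, with
`inf_j a i j = 0` for each `i`. -/
def C00IsDSeq (a : ℕ → ℕ → (ℕ →₀ ℝ)) : Prop :=
  (∃ u : ℕ →₀ ℝ, ∀ i j, a i j ≤ u) ∧ (∀ i j, 0 ≤ a i j) ∧
    (∀ i j, a i (j + 1) ≤ a i j) ∧ (∀ i, IsGLB (Set.range (a i)) 0)

/-- A tagged partition of `[0,1]`: finitely many Borel sets covering `[0,1]`, with tags in the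
pieces, and pairwise intersections of Lebesgue measure zero. -/
def C00IsPartition (k : ℕ) (Es : ℕ → Set ℝ) (ts : ℕ → ℝ) : Prop :=
  (∀ i < k, MeasurableSet (Es i)) ∧ (∀ i < k, ts i ∈ Es i) ∧
    (∀ i < k, ∀ j < k, i ≠ j → volume (Es i ∩ Es j) = 0) ∧
    (⋃ i < k, Es i) = Set.Icc (0 : ℝ) 1

/-- `δ`-fineness of a tagged partition of `[0,1]`. -/
def C00IsFine (δ : ℝ → ℝ) (k : ℕ) (Es : ℕ → Set ℝ) (ts : ℕ → ℝ) : Prop :=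
  ∀ i < k, ∀ w ∈ Es i, |w - ts i| < δ (ts i)

/-- The Riemann sum `Σ_i λ(E_i) • f(t_i)` of `f : [0,1] → c₀₀` over a tagged partition,
where `λ` is Lebesgue measure. -/
noncomputable def C00RiemannSum (f : ℝ → (ℕ →₀ ℝ)) (k : ℕ) (Es : ℕ → Set ℝ) (ts : ℕ → ℝ) :
    ℕ →₀ ℝ :=
  ∑ i ∈ Finset.range k, (volume (Es i)).toReal • f (ts i)

/-- `f : [0,1] → c₀₀` is Kurzweil–Henstock integrable with integral `I`. -/
def C00HasKHIntegral (f : ℝ → (ℕ →₀ ℝ)) (I : ℕ →₀ ℝ) : Prop :=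
  ∃ a : ℕ → ℕ → (ℕ →₀ ℝ), C00IsDSeq a ∧ ∀ φ : ℕ → ℕ,
    ∃ s : ℕ →₀ ℝ, IsLUB (Set.range fun i => a i (φ i)) s ∧
      ∃ δ : ℝ → ℝ, (∀ x, 0 < δ x) ∧
        ∀ (k : ℕ) (Es : ℕ → Set ℝ) (ts : ℕ → ℝ),
          C00IsPartition k Es ts → C00IsFine δ k Es ts →
            |C00RiemannSum f k Es ts - I| ≤ s

lemma c00_exists_sum (f : ℝ → (ℕ →₀ ℝ))
    (hf₁ : ∀ n : ℕ, 1 ≤ n → f (1 / (n : ℝ)) = Finsupp.single n 1)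
    (hf₂ : ∀ x : ℝ, (¬ ∃ n : ℕ, 1 ≤ n ∧ x = 1 / (n : ℝ)) → f x = 0)
    (δ : ℝ → ℝ) (hδ : ∀ x, 0 < δ x) (n : ℕ) (hn : 1 ≤ n) :
    ∃ (k : ℕ) (Es : ℕ → Set ℝ) (ts : ℕ → ℝ),
      C00IsPartition k Es ts ∧ C00IsFine δ k Es ts ∧
      0 < C00RiemannSum f k Es ts n := by
  classical
  have hfnn : ∀ x m, 0 ≤ f x m := by
    intro x m
    by_cases h : ∃ m' : ℕ, 1 ≤ m' ∧ x = 1 / (m' : ℝ)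
    · obtain ⟨m', hm', rfl⟩ := h
      rw [hf₁ m' hm', Finsupp.single_apply]
      split_ifs <;> norm_num
    · rw [hf₂ x h]; simp
  set t₀ : ℝ := 1 / (n : ℝ) with ht₀
  have hnpos : (0:ℝ) < n := by exact_mod_cast hn
  have ht₀pos : 0 < t₀ := by positivity
  have ht₀le : t₀ ≤ 1 := by
    rw [ht₀, div_le_one hnpos]; exact_mod_cast hn
  have ht₀mem : t₀ ∈ Set.Icc (0:ℝ) 1 := ⟨le_of_lt ht₀pos, ht₀le⟩
  have hK : IsCompact (Set.Icc (0:ℝ) 1 \ Metric.ball t₀ (δ t₀)) :=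
    isCompact_Icc.diff Metric.isOpen_ball
  obtain ⟨F, hFsub, hFcov⟩ := hK.elim_nhds_subcover (fun x => Metric.ball x (δ x))
    (fun x _ => Metric.ball_mem_nhds x (hδ x))
  set L := F.toList with hL
  set ts : ℕ → ℝ := fun i => if i = 0 then t₀ else L.getD (i - 1) 0 with hts
  set B : ℕ → Set ℝ := fun i => Metric.ball (ts i) (δ (ts i)) with hB
  set Es : ℕ → Set ℝ := fun i => ((Set.Icc (0:ℝ) 1 ∩ B i) \ ⋃ j < i, B j) ∪ {ts i} with hEs
  set k := L.length + 1 with hk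
  have hts0 : ts 0 = t₀ := by simp [hts]
  have htsmem : ∀ i, ts i ∈ Set.Icc (0:ℝ) 1 := by
    intro i
    rcases Nat.eq_zero_or_pos i with h | h
    · simpa [h, hts] using ht₀mem
    · have hi : ts i = L.getD (i - 1) 0 := by simp [hts, Nat.pos_iff_ne_zero.1 h]
      rw [hi]
      by_cases hlt : i - 1 < L.length
      · have hmem : L.getD (i-1) 0 ∈ L := by
          rw [List.getD_eq_getElem L 0 hlt]; exact List.getElem_mem hlt
        have hmF : L.getD (i-1) 0 ∈ F := Finset.mem_toList.1 hmem
        exact (hFsub _ hmF).1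
      · rw [List.getD_eq_default L 0 (not_lt.1 hlt)]
        exact ⟨le_refl 0, zero_le_one⟩
  have htsEs : ∀ i, ts i ∈ Es i := fun i => Or.inr rfl
  have hEssub : ∀ i, Es i ⊆ Set.Icc (0:ℝ) 1 := by
    intro i x hx
    rcases hx with hx | hx
    · exact hx.1.1
    · rw [Set.mem_singleton_iff.1 hx]; exact htsmem i
  have hmemB : ∀ i x, x ∈ B i ↔ |x - ts i| < δ (ts i) := by
    intro i x
    simp [hB, Metric.mem_ball, Real.dist_eq]
  refine ⟨k, Es, ts, ⟨?_, fun i _ => htsEs i, ?_, ?_⟩, ?_, ?_⟩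
  · -- measurability
    intro i _
    exact (((measurableSet_Icc.inter measurableSet_ball).diff
      (MeasurableSet.iUnion fun j => MeasurableSet.iUnion fun _ => measurableSet_ball)).union
      (measurableSet_singleton _))
  · -- pairwise a.e. disjoint
    have key : ∀ i j : ℕ, i < j → Es i ∩ Es j ⊆ {ts i} ∪ {ts j} := by
      rintro i j hij x ⟨hxi, hxj⟩
      rcases hxi with hxi | hxi
      · rcases hxj with hxj | hxj
        · exact absurd (Set.mem_iUnion.2 ⟨i, Set.mem_iUnion.2 ⟨hij, hxi.1.2⟩⟩) hxj.2
        · exact Or.inr hxj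
      · exact Or.inl hxi
    intro i _ j _ hij
    have hsub : Es i ∩ Es j ⊆ {ts i} ∪ {ts j} := by
      rcases lt_or_gt_of_ne hij with h | h
      · exact key i j h
      · rw [Set.inter_comm]
        exact (key j i h).trans (Set.union_comm _ _).subset
    exact measure_mono_null hsub
      (measure_union_null Real.volume_singleton Real.volume_singleton)
  · -- covers
    apply Set.Subset.antisymm
    · exact Set.iUnion₂_subset fun i _ => hEssub i
    · intro x hx
      have hex : ∃ i, i < k ∧ x ∈ B i := by
        by_cases h0 : x ∈ Metric.ball t₀ (δ t₀)
        · exact ⟨0, Nat.succ_pos _, by simpa [hB, hts0] using h0⟩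
        · have hxK : x ∈ Set.Icc (0:ℝ) 1 \ Metric.ball t₀ (δ t₀) := ⟨hx, h0⟩
          obtain ⟨y, hyF, hy⟩ := Set.mem_iUnion₂.1 (hFcov hxK)
          have hyL : y ∈ L := Finset.mem_toList.2 hyF
          obtain ⟨m, hm, hLm⟩ := List.mem_iff_getElem.1 hyL
          refine ⟨m + 1, by rw [hk]; omega, ?_⟩
          have hty : ts (m+1) = y := by
            simp only [hts, Nat.add_sub_cancel, if_neg (Nat.succ_ne_zero m)]
            rw [List.getD_eq_getElem L 0 hm, hLm]
          simpa [hB, hty] using hy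
      set i := Nat.find hex with hi
      obtain ⟨hik, hxB⟩ := Nat.find_spec hex
      refine Set.mem_biUnion hik (Or.inl ⟨⟨hx, hxB⟩, ?_⟩)
      intro hmem
      obtain ⟨j, hji⟩ := Set.mem_iUnion.1 hmem
      obtain ⟨hji', hxBj⟩ := Set.mem_iUnion.1 hji
      exact Nat.find_min hex hji' ⟨hji'.trans hik, hxBj⟩
  · -- fine
    intro i _ w hw
    rcases hw with hw | hw
    · exact (hmemB i w).1 hw.1.2
    · rw [Set.mem_singleton_iff.1 hw]
      simpa using hδ (ts i)
  · -- positivity of sum at n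
    have hIoo : Set.Ioo (max 0 (t₀ - δ t₀)) t₀ ⊆ Es 0 := by
      intro x hx
      refine Or.inl ⟨⟨⟨le_of_lt (lt_of_le_of_lt (le_max_left _ _) hx.1),
        le_trans (le_of_lt hx.2) ht₀le⟩, ?_⟩, by simp⟩
      rw [hmemB, hts0, abs_lt]
      constructor
      · have h2 := lt_of_le_of_lt (le_max_right _ _) hx.1
        linarith
      · linarith [hx.2, hδ t₀]
    have hmaxlt : max 0 (t₀ - δ t₀) < t₀ := by
      apply max_lt ht₀pos
      linarith [hδ t₀]
    have hvolpos : 0 < volume (Es 0) := by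
      calc (0:ENNReal) < volume (Set.Ioo (max 0 (t₀ - δ t₀)) t₀) := by
            rw [Real.volume_Ioo]
            exact ENNReal.ofReal_pos.2 (by linarith)
        _ ≤ volume (Es 0) := measure_mono hIoo
    have hvolne : volume (Es 0) ≠ ⊤ := by
      apply ne_top_of_le_ne_top _ (measure_mono (hEssub 0))
      rw [Real.volume_Icc]
      exact ENNReal.ofReal_ne_top
    have hcoe : C00RiemannSum f k Es ts n =
        ∑ i ∈ Finset.range k, (volume (Es i)).toReal * f (ts i) n := by
      simp [C00RiemannSum, Finsupp.finset_sum_apply, Finsupp.smul_apply, smul_eq_mul]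
    rw [hcoe]
    apply Finset.sum_pos' (fun i _ => mul_nonneg ENNReal.toReal_nonneg (hfnn (ts i) n))
    refine ⟨0, Finset.mem_range.2 (Nat.succ_pos _), ?_⟩
    rw [hts0, ht₀, hf₁ n hn]
    simp only [Finsupp.single_eq_same]
    rw [mul_one]
    exact ENNReal.toReal_pos (ne_of_gt hvolpos) hvolne

/-- The function `f : [0,1] → c₀₀` with `f(1/n) = u_n` (the `n`-th unit vector) for `n ≥ 1`
and `f = 0` elsewhere is Bochner-null but not `(KH)`-integrable on `[0,1]`; in fact, for every
gage `δ` the set of Riemann sums over `δ`-fine partitions of `[0,1]` is not bounded from above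
in `c₀₀`. -/
theorem c00_not_KHIntegrable (f : ℝ → (ℕ →₀ ℝ))
    (hf₁ : ∀ n : ℕ, 1 ≤ n → f (1 / (n : ℝ)) = Finsupp.single n 1)
    (hf₂ : ∀ x : ℝ, (¬ ∃ n : ℕ, 1 ≤ n ∧ x = 1 / (n : ℝ)) → f x = 0) :
    (¬ ∃ I : ℕ →₀ ℝ, C00HasKHIntegral f I) ∧
      ∀ δ : ℝ → ℝ, (∀ x, 0 < δ x) →
        ¬ BddAbove {S : ℕ →₀ ℝ | ∃ (k : ℕ) (Es : ℕ → Set ℝ) (ts : ℕ → ℝ),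
          C00IsPartition k Es ts ∧ C00IsFine δ k Es ts ∧ S = C00RiemannSum f k Es ts} := by
  have part2 : ∀ δ : ℝ → ℝ, (∀ x, 0 < δ x) →
      ¬ BddAbove {S : ℕ →₀ ℝ | ∃ (k : ℕ) (Es : ℕ → Set ℝ) (ts : ℕ → ℝ),
        C00IsPartition k Es ts ∧ C00IsFine δ k Es ts ∧ S = C00RiemannSum f k Es ts} := by
    rintro δ hδ ⟨u, hu⟩
    set n := u.support.sup id + 1 with hn
    obtain ⟨k, Es, ts, hpart, hfine, hpos⟩ :=
      c00_exists_sum f hf₁ hf₂ δ hδ n (Nat.le_add_left 1 _)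
    have hmem : C00RiemannSum f k Es ts ∈ {S : ℕ →₀ ℝ | ∃ (k : ℕ) (Es : ℕ → Set ℝ) (ts : ℕ → ℝ),
        C00IsPartition k Es ts ∧ C00IsFine δ k Es ts ∧ S = C00RiemannSum f k Es ts} :=
      ⟨k, Es, ts, hpart, hfine, rfl⟩
    have hle := hu hmem
    have h1 : C00RiemannSum f k Es ts n ≤ u n := Finsupp.le_def.1 hle n
    have h2 : u n = 0 := by
      apply Finsupp.notMem_support_iff.1
      intro hns
      have := Finset.le_sup (f := id) hns
      simp only [id] at this
      omega
    linarith
  refine ⟨?_, part2⟩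
  rintro ⟨I, a, hD, hφ⟩
  obtain ⟨s, hs, δ, hδ, hbound⟩ := hφ (fun _ => 0)
  apply part2 δ hδ
  refine ⟨I + s, ?_⟩
  rintro S ⟨k, Es, ts, hp, hfn, rfl⟩
  have h1 := hbound k Es ts hp hfn
  have h2 : C00RiemannSum f k Es ts - I ≤ s := le_trans (le_abs_self _) h1
  calc C00RiemannSum f k Es ts = I + (C00RiemannSum f k Es ts - I) := by abel
    _ ≤ I + s := add_le_add_right h2 I
end
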